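/- Let χ: K^× → C_p^× be a continuous multiplicative character on a local field K with uniformizer π, and suppose |χ(π)|_p ∈ o_p^× with χ(π) ≠ 1 of absolute value 1. If f: K → C_p is a function such that both limits lim_{x→0} f(x)χ(x) and lim_{x→0} f(x)χ(x)χ_λ(x) exist, where χ_λ is the unramified character with χ_λ(π) = λ ∈ o_p^× \ {1}, then lim_{x→0} f(x)χ(x) = 0. -/
import Mathlib


open Filter Topology

/-- Let `K` be a nonarchimedean local field with uniformizer `π`, `χ : K^× → ℂ_p^×` a
multiplicative character, and `χ_λ` the unramified character with `χ_λ(π) = λ` where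
`λ ∈ o_p^× \ {1}` (`‖λ‖ = 1`, `λ ≠ 1`).  If both limits `lim_{x→0} f(x)χ(x)` and
`lim_{x→0} f(x)χ(x)χ_λ(x)` exist, then `lim_{x→0} f(x)χ(x) = 0`. -/
theorem limit_zero_of_twisted_limits_exist
    (K : Type*) [NontriviallyNormedField K]
    (Cp : Type*) [NormedField Cp]
    (π : K) (hπ0 : π ≠ 0) (hπ1 : ‖π‖ < 1)
    -- every nonzero element of `K` is `π^n` times a unit:
    (hval : ∀ x : K, x ≠ 0 → ∃ (n : ℤ) (u : K), ‖u‖ = 1 ∧ x = π ^ n * u)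
    (χ : K → Cp)
    (hχmul : ∀ x y : K, x ≠ 0 → y ≠ 0 → χ (x * y) = χ x * χ y)
    (hχ1 : χ 1 = 1)
    (lam : Cp) (hlam1 : ‖lam‖ = 1) (hlam2 : lam ≠ 1)
    -- the unramified character `χ_λ` with `χ_λ(π) = λ`, trivial on units:
    (χl : K → Cp)
    (hχlmul : ∀ x y : K, x ≠ 0 → y ≠ 0 → χl (x * y) = χl x * χl y)
    (hχlunit : ∀ u : K, ‖u‖ = 1 → χl u = 1)
    (hχlπ : χl π = lam)
    (f : K → Cp) (L : Cp)
    (hL : Tendsto (fun x => f x * χ x) (𝓝[≠] (0 : K)) (𝓝 L))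
    (hL' : ∃ L' : Cp, Tendsto (fun x => f x * χ x * χl x) (𝓝[≠] (0 : K)) (𝓝 L')) :
    L = 0 := by
  obtain ⟨L', hL'⟩ := hL'
  by_contra hL0
  -- the sequence x n = π^(n+1) tends to 0 within {0}ᶜ
  have hπpow : ∀ n : ℕ, (π : K) ^ (n + 1) ≠ 0 := fun n => pow_ne_zero _ hπ0
  have hseq : Tendsto (fun n : ℕ => π ^ (n + 1)) atTop (𝓝[≠] (0 : K)) := by
    apply tendsto_nhdsWithin_of_tendsto_nhds_of_eventually_within
    · exact (tendsto_pow_atTop_nhds_zero_of_norm_lt_one hπ1).comp (tendsto_add_atTop_nat 1)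
    · exact Eventually.of_forall fun n => hπpow n
  set g : ℕ → Cp := fun n => f (π ^ (n + 1)) * χ (π ^ (n + 1)) with hg_def
  have hg : Tendsto g atTop (𝓝 L) := hL.comp hseq
  have hχlpow : ∀ n : ℕ, χl (π ^ (n + 1)) = lam ^ (n + 1) := by
    intro n
    induction n with
    | zero => simpa using hχlπ
    | succ m ih =>
      have : (π : K) ^ (m + 2) = π ^ (m + 1) * π := by ring
      rw [this, hχlmul _ _ (hπpow m) hπ0, ih, hχlπ]; ring
  have hg' : Tendsto (fun n : ℕ => g n * lam ^ (n + 1)) atTop (𝓝 L') := by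
    have := hL'.comp hseq
    refine this.congr fun n => ?_
    simp [Function.comp, hχlpow n, hg_def]
  -- divide: λ^(n+1) tends to L' * L⁻¹
  have hginv : Tendsto (fun n => (g n)⁻¹) atTop (𝓝 L⁻¹) := hg.inv₀ hL0
  have hprod : Tendsto (fun n => g n * lam ^ (n + 1) * (g n)⁻¹) atTop (𝓝 (L' * L⁻¹)) :=
    hg'.mul hginv
  have hge : ∀ᶠ n in atTop, g n ≠ 0 := by
    have := hg.eventually_ne hL0
    exact this
  have hlamlim : Tendsto (fun n : ℕ => lam ^ (n + 1)) atTop (𝓝 (L' * L⁻¹)) := by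
    refine hprod.congr' ?_
    filter_upwards [hge] with n hn
    field_simp
  -- shift: λ^(n+2) also tends there
  have hlamlim2 : Tendsto (fun n : ℕ => lam ^ (n + 2)) atTop (𝓝 (L' * L⁻¹)) := by
    have := hlamlim.comp (tendsto_add_atTop_nat 1)
    refine this.congr fun n => ?_
    simp [Function.comp, pow_succ]
  have hdiff : Tendsto (fun n : ℕ => lam ^ (n + 2) - lam ^ (n + 1)) atTop (𝓝 0) := by
    simpa using hlamlim2.sub hlamlim
  have hnorm : Tendsto (fun n : ℕ => ‖lam ^ (n + 2) - lam ^ (n + 1)‖) atTop (𝓝 0) := by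
    simpa using hdiff.norm
  have hconst : ∀ n : ℕ, ‖lam ^ (n + 2) - lam ^ (n + 1)‖ = ‖lam - 1‖ := by
    intro n
    have : lam ^ (n + 2) - lam ^ (n + 1) = lam ^ (n + 1) * (lam - 1) := by ring
    rw [this, norm_mul, norm_pow, hlam1, one_pow, one_mul]
  have : Tendsto (fun _ : ℕ => ‖lam - 1‖) atTop (𝓝 0) := hnorm.congr fun n => hconst n
  have h0 : ‖lam - 1‖ = 0 := tendsto_nhds_unique tendsto_const_nhds this
  exact hlam2 (by rwa [norm_eq_zero, sub_eq_zero] at h0)
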